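/- For every x < 0, the supremum over b ∈ [0,∞) of ∫₀^b f(p)(1+xp) dp equals -x ∫₀^{-1/x} F(p) dp, and this supremum is attained at the unique maximizer b* = -1/x. -/

import Mathlib

open MeasureTheory Filter Set

/-- For every `x < 0`, the supremum over `b ∈ [0,∞)` of `∫₀^b f(p)(1+xp) dp` equals
`-x ∫₀^{-1/x} F(p) dp`, and this supremum is attained at the unique maximizer `b* = -1/x`. -/
theorem stmt_0 (f F : ℝ → ℝ)
    (hf_cont : Continuous f)
    (hf_nonpos : ∀ p ≤ (0 : ℝ), f p = 0)
    (hf_pos : ∀ p : ℝ, 0 < p → 0 < f p)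
    (hf_int : (∫ p in Set.Ioi (0 : ℝ), f p) = 1)
    (hf_tail : Filter.Tendsto (fun p : ℝ => p ^ 3 * f p) Filter.atTop (nhds 0))
    (hmean_int : MeasureTheory.IntegrableOn (fun p : ℝ => p * f p) (Set.Ioi 0))
    (hF : ∀ b : ℝ, F b = ∫ p in (0 : ℝ)..b, f p)
    (x : ℝ) (hx : x < 0) :
    IsGreatest ((fun b : ℝ => ∫ p in (0 : ℝ)..b, f p * (1 + x * p)) '' Set.Ici (0 : ℝ))
        (-x * ∫ p in (0 : ℝ)..(-1 / x), F p)
      ∧ (∫ p in (0 : ℝ)..(-1 / x), f p * (1 + x * p))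
          = -x * ∫ p in (0 : ℝ)..(-1 / x), F p
      ∧ ∀ b ∈ Set.Ici (0 : ℝ),
          (∫ p in (0 : ℝ)..b, f p * (1 + x * p))
              = -x * (∫ p in (0 : ℝ)..(-1 / x), F p) → b = -1 / x := by
  have hx0 : x ≠ 0 := ne_of_lt hx
  set b' : ℝ := -1 / x with hb'
  have hb'pos : 0 < b' := by
    rw [hb', div_pos_iff]
    right
    exact ⟨by norm_num, hx⟩
  have hxb : x * b' = -1 := by rw [hb']; field_simp
  set h : ℝ → ℝ := fun p => f p * (1 + x * p) with hh
  have hh_cont : Continuous h := by fun_prop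
  set g : ℝ → ℝ := fun b => ∫ p in (0 : ℝ)..b, h p with hg
  have hgd : ∀ b : ℝ, HasDerivAt g (h b) b := fun b =>
    intervalIntegral.integral_hasDerivAt_right (hh_cont.intervalIntegrable _ _)
      (hh_cont.stronglyMeasurableAtFilter _ _) hh_cont.continuousAt
  have hg_cont : Continuous g := continuous_iff_continuousAt.2 fun b => (hgd b).continuousAt
  have hFeq : F = fun t => ∫ p in (0 : ℝ)..t, f p := funext hF
  have hFd : ∀ b : ℝ, HasDerivAt F (f b) b := by
    rw [hFeq]
    exact fun b =>
      intervalIntegral.integral_hasDerivAt_right (hf_cont.intervalIntegrable _ _)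
        (hf_cont.stronglyMeasurableAtFilter _ _) hf_cont.continuousAt
  have hF0 : F 0 = 0 := by rw [hF 0, intervalIntegral.integral_same]
  -- key identity via integration by parts
  have parts := intervalIntegral.integral_mul_deriv_eq_deriv_mul
    (a := (0:ℝ)) (b := b') (u := F) (u' := f) (v := fun p => p) (v' := fun _ => (1 : ℝ))
    (fun t _ => hFd t) (fun t _ => hasDerivAt_id t)
    (hf_cont.intervalIntegrable _ _) (continuous_const.intervalIntegrable _ _)
  simp only [mul_one, mul_zero, hF0, zero_mul, sub_zero] at parts
  have hsplit : g b' = F b' + x * ∫ p in (0 : ℝ)..b', f p * p := by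
    have : ∀ p : ℝ, h p = f p + x * (f p * p) := by intro p; simp [hh]; ring
    rw [hg]
    simp only [this]
    rw [intervalIntegral.integral_add (hf_cont.intervalIntegrable _ _)
        ((by fun_prop : Continuous fun p : ℝ => x * (f p * p)).intervalIntegrable _ _),
      intervalIntegral.integral_const_mul, ← hF b']
  have key : g b' = -x * ∫ p in (0 : ℝ)..b', F p := by
    rw [hsplit]
    have : (∫ p in (0:ℝ)..b', F p) = F b' * b' - ∫ p in (0:ℝ)..b', f p * p := by
      exact parts
    rw [this]
    linear_combination F b' * hxb
  -- strict monotonicity on [0, b'] and strict antitonicity on [b', ∞)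
  have hmono : StrictMonoOn g (Icc 0 b') := by
    apply strictMonoOn_of_deriv_pos (convex_Icc _ _) hg_cont.continuousOn
    intro t ht
    rw [interior_Icc] at ht
    rw [(hgd t).deriv]
    apply mul_pos (hf_pos t ht.1)
    have h2 : x * b' < x * t := mul_lt_mul_of_neg_left ht.2 hx
    linarith [hxb ▸ h2]
  have hanti : StrictAntiOn g (Ici b') := by
    apply strictAntiOn_of_deriv_neg (convex_Ici _) hg_cont.continuousOn
    intro t ht
    rw [interior_Ici] at ht
    rw [(hgd t).deriv]
    have hft : 0 < f t := hf_pos t (lt_trans hb'pos ht)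
    have h2 : x * t < x * b' := mul_lt_mul_of_neg_left ht hx
    rw [hxb] at h2
    exact mul_neg_of_pos_of_neg hft (by linarith)
  have hb'mem : b' ∈ Icc (0 : ℝ) b' := ⟨hb'pos.le, le_refl _⟩
  have hlt : ∀ b ∈ Ici (0 : ℝ), b ≠ b' → g b < g b' := by
    intro b hb hne
    rcases lt_or_gt_of_ne hne with hlt | hgt
    · exact hmono ⟨hb, hlt.le⟩ hb'mem hlt
    · exact hanti (le_refl b') hgt.le hgt
  refine ⟨⟨⟨b', hb'pos.le, key⟩, ?_⟩, key, ?_⟩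
  · rintro y ⟨b, hb, rfl⟩
    rw [← key]
    rcases eq_or_ne b b' with rfl | hne
    · exact le_refl _
    · exact (hlt b hb hne).le
  · intro b hb heq
    by_contra hne
    exact absurd (heq.trans key.symm) (ne_of_lt (hlt b hb hne))
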